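/- Let $(Y'_t)_{t\in\mathbb{N}}$ be square-integrable $\mathbb{R}^p$-valued random vectors on a probability space, let $c_0 \in \mathbb{R}^p$ be a constant, and for $t \ge 1$ let $c_t = f_t(Y_0,\ldots,Y_{t-1})$ where $f_t : (\mathbb{R}^p)^t \to \mathbb{R}^p$ is a Borel-measurable function and $Y_t := Y'_t + c_t$ (with $Y_0 := Y'_0 + c_0$). Then for every $t$: (i) $\sigma(Y_0,\ldots,Y_t) = \sigma(Y'_0,\ldots,Y'_t)$, and (ii) the innovations coincide almost surely: $Y_t - \mathsf{E}[Y_t \mid \sigma(Y_0,\ldots,Y_{t-1})] = Y'_t - \mathsf{E}[Y'_t \mid \sigma(Y'_0,\ldots,Y'_{t-1})]$ for $t \ge 1$, and $Y_0 - \mathsf{E}[Y_0] = Y'_0 - \mathsf{E}[Y'_0]$. (This is the key step showing that the innovation process of a controlled linear system does not depend on the control history, since the control contribution to the output is a measurable function of past outputs.) -/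

import Mathlib

open MeasureTheory

/-- Shifting a process by a (measurable) function of its own past does not change the
generated sigma-algebras nor the innovations. -/
theorem innovations_invariant_under_past_measurable_shift
    {Ω : Type*} [MeasurableSpace Ω] (μ : Measure Ω) [IsProbabilityMeasure μ]
    {p : ℕ} (Y' Y : ℕ → Ω → (Fin p → ℝ))
    (hY'meas : ∀ t, Measurable (Y' t))
    (hY'2 : ∀ t, MemLp (Y' t) 2 μ)
    (hY2 : ∀ t, MemLp (Y t) 2 μ)
    (c0 : Fin p → ℝ)
    (f : (t : ℕ) → (Fin t → (Fin p → ℝ)) → (Fin p → ℝ))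
    (hf : ∀ t, Measurable (f t))
    (hY0 : Y 0 = fun ω => Y' 0 ω + c0)
    (hYt : ∀ t : ℕ,
      Y (t + 1) = fun ω => Y' (t + 1) ω + f (t + 1) (fun i : Fin (t + 1) => Y i ω)) :
    (∀ t : ℕ,
      (⨆ i : Fin (t + 1), MeasurableSpace.comap (Y i) inferInstance)
        = (⨆ i : Fin (t + 1), MeasurableSpace.comap (Y' i) inferInstance))
    ∧ (∀ t : ℕ,
      (fun ω => Y (t + 1) ω
          - (μ[Y (t + 1) | ⨆ i : Fin (t + 1), MeasurableSpace.comap (Y i) inferInstance]) ω)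
        =ᵐ[μ]
      (fun ω => Y' (t + 1) ω
          - (μ[Y' (t + 1) | ⨆ i : Fin (t + 1), MeasurableSpace.comap (Y' i) inferInstance]) ω))
    ∧ ((fun ω => Y 0 ω - ∫ ω', Y 0 ω' ∂μ) =ᵐ[μ] fun ω => Y' 0 ω - ∫ ω', Y' 0 ω' ∂μ) := by
  -- measurability of Y
  have hYmeas : ∀ t, Measurable (Y t) := by
    intro t
    induction t using Nat.strong_induction_on with
    | _ t ih =>
      match t with
      | 0 =>
        rw [hY0]; exact (hY'meas 0).add measurable_const
      | (t + 1) =>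
        rw [hYt t]
        exact (hY'meas _).add ((hf _).comp
          (measurable_pi_lambda _ fun i => ih i i.isLt))
  -- notation
  set mY : ℕ → MeasurableSpace Ω :=
    fun t => ⨆ i : Fin (t + 1), MeasurableSpace.comap (Y i) inferInstance with hmYdef
  set mY' : ℕ → MeasurableSpace Ω :=
    fun t => ⨆ i : Fin (t + 1), MeasurableSpace.comap (Y' i) inferInstance with hmY'def
  have hmemY : ∀ t (i : Fin (t + 1)), Measurable[mY t] (Y i) := fun t i =>
    measurable_iff_comap_le.mpr
      (le_iSup (fun j : Fin (t + 1) => MeasurableSpace.comap (Y j) inferInstance) i)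
  have hmemY' : ∀ t (i : Fin (t + 1)), Measurable[mY' t] (Y' i) := fun t i =>
    measurable_iff_comap_le.mpr
      (le_iSup (fun j : Fin (t + 1) => MeasurableSpace.comap (Y' j) inferInstance) i)
  have hmono : ∀ t, mY t ≤ mY (t + 1) := by
    intro t
    refine iSup_le fun i => ?_
    have := le_iSup (fun j : Fin (t + 2) => MeasurableSpace.comap (Y j) inferInstance) i.castSucc
    simpa using this
  have hmono' : ∀ t, mY' t ≤ mY' (t + 1) := by
    intro t
    refine iSup_le fun i => ?_
    have := le_iSup (fun j : Fin (t + 2) => MeasurableSpace.comap (Y' j) inferInstance) i.castSucc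
    simpa using this
  -- the shift term is measurable w.r.t. the past of Y
  have hCmeas : ∀ t, Measurable[mY t] (fun ω => f (t + 1) (fun i : Fin (t + 1) => Y i ω)) := by
    intro t
    exact (hf _).comp
      (@measurable_pi_lambda Ω (Fin (t + 1)) (fun _ => Fin p → ℝ) (mY t) _ _
        fun i => hmemY t i)
  -- equality of the sigma-algebras
  have key : ∀ t, mY t = mY' t := by
    intro t
    induction t with
    | zero =>
      apply le_antisymm
      · refine iSup_le fun i => ?_
        have hi : (i : ℕ) = 0 := by omega
        have : Measurable[mY' 0] (Y (i : ℕ)) := by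
          rw [hi, hY0]; exact (hmemY' 0 ⟨0, by omega⟩).add measurable_const
        exact measurable_iff_comap_le.mp this
      · refine iSup_le fun i => ?_
        have hi : (i : ℕ) = 0 := by omega
        have hY'0 : Y' 0 = fun ω => Y 0 ω - c0 := by
          funext ω; rw [hY0]; simp
        have : Measurable[mY 0] (Y' (i : ℕ)) := by
          rw [hi, hY'0]; exact (hmemY 0 ⟨0, by omega⟩).sub measurable_const
        exact measurable_iff_comap_le.mp this
    | succ t ih =>
      apply le_antisymm
      · refine iSup_le fun i => ?_
        refine measurable_iff_comap_le.mp ?_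
        induction i using Fin.lastCases with
        | last =>
          show Measurable[mY' (t + 1)] (Y (t + 1))
          rw [hYt t]
          refine (hmemY' (t + 1) (Fin.last (t + 1))).add ?_
          exact ((hCmeas t).mono (ih ▸ hmono' t) le_rfl)
        | cast j =>
          show Measurable[mY' (t + 1)] (Y (j : ℕ))
          have : Measurable[mY t] (Y (j : ℕ)) := by
            have := hmemY t j; simpa using this
          simpa using this.mono (ih ▸ hmono' t) le_rfl
      · refine iSup_le fun i => ?_
        refine measurable_iff_comap_le.mp ?_
        induction i using Fin.lastCases with
        | last =>
          show Measurable[mY (t + 1)] (Y' (t + 1))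
          have hsub : Y' (t + 1)
              = fun ω => Y (t + 1) ω - f (t + 1) (fun i : Fin (t + 1) => Y i ω) := by
            funext ω; rw [hYt t]; simp
          rw [hsub]
          exact (hmemY (t + 1) (Fin.last (t + 1))).sub ((hCmeas t).mono (hmono t) le_rfl)
        | cast j =>
          show Measurable[mY (t + 1)] (Y' (j : ℕ))
          have : Measurable[mY' t] (Y' (j : ℕ)) := by
            have := hmemY' t j; simpa using this
          simpa using this.mono (ih ▸ (hmono t)) le_rfl
  refine ⟨key, ?_, ?_⟩
  · -- innovations for t+1
    intro t
    have hm : mY t ≤ (inferInstance : MeasurableSpace Ω) :=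
      iSup_le fun i => measurable_iff_comap_le.mp (hYmeas i)
    set C : Ω → (Fin p → ℝ) := fun ω => f (t + 1) (fun i : Fin (t + 1) => Y i ω) with hC
    have hCeq : C = fun ω => Y (t + 1) ω - Y' (t + 1) ω := by
      funext ω; rw [hYt t]; simp; rfl
    have hCint : Integrable C μ := by
      rw [hCeq]
      exact ((hY2 (t + 1)).integrable one_le_two).sub ((hY'2 (t + 1)).integrable one_le_two)
    have hY'int : Integrable (Y' (t + 1)) μ := (hY'2 (t + 1)).integrable one_le_two
    have hsum : Y (t + 1) = Y' (t + 1) + C := by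
      funext ω; rw [hYt t]; rfl
    have hce : μ[Y (t + 1)|mY t] =ᵐ[μ] fun ω => (μ[Y' (t + 1)|mY t]) ω + C ω := by
      calc μ[Y (t + 1)|mY t] = μ[Y' (t + 1) + C|mY t] := by rw [hsum]
        _ =ᵐ[μ] μ[Y' (t + 1)|mY t] + μ[C|mY t] := condExp_add hY'int hCint (mY t)
        _ = μ[Y' (t + 1)|mY t] + C := by
              rw [condExp_of_stronglyMeasurable hm
                (Measurable.stronglyMeasurable (hCmeas t)) hCint]
        _ = fun ω => (μ[Y' (t + 1)|mY t]) ω + C ω := rfl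
    have hgoal : (fun ω => Y (t + 1) ω - (μ[Y (t + 1)|mY t]) ω)
        =ᵐ[μ] (fun ω => Y' (t + 1) ω - (μ[Y' (t + 1)|mY t]) ω) := by
      filter_upwards [hce] with ω hω
      rw [hω, hsum]
      show Y' (t + 1) ω + C ω - ((μ[Y' (t + 1)|mY t]) ω + C ω) = _
      abel
    have hms : μ[Y' (t + 1)|mY t] = μ[Y' (t + 1)|mY' t] := by rw [key t]
    rw [← hms]
    exact hgoal
  · -- t = 0 case
    have hint0 : Integrable (Y' 0) μ := (hY'2 0).integrable one_le_two
    have : ∫ ω', Y 0 ω' ∂μ = (∫ ω', Y' 0 ω' ∂μ) + c0 := by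
      rw [hY0]
      rw [integral_add hint0 (integrable_const c0)]
      simp
    refine Filter.Eventually.of_forall fun ω => ?_
    rw [this, hY0]
    exact add_sub_add_right_eq_sub _ _ _
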